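/- Let N be a strongly tree-based phylogenetic network. Then the clique number ω(N) is at most 3, while for every k ∈ ℕ there exists a tree-based network with clique number at least k. -/

import Mathlib

open SimpleGraph

/-- Degree of a vertex: the cardinality of its neighbor set. -/
noncomputable def ndeg {V : Type*} (G : SimpleGraph V) (v : V) : ℕ := (G.neighborSet v).ncard

/-- T is a spanning tree of G witnessing strong tree-basedness: T is a spanning tree whose
leaves are exactly the leaves of G, every edge of G between vertices of G-degree ≥ 4 is an
edge of T, and every vertex of T-degree 2 has G-degree 3. -/
def IsSTBWitness {V : Type*} (G T : SimpleGraph V) : Prop :=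
  T ≤ G ∧ T.IsTree ∧ (∀ v, ndeg T v = 1 ↔ ndeg G v = 1) ∧
    (∀ u v, G.Adj u v → 4 ≤ ndeg G u → 4 ≤ ndeg G v → T.Adj u v) ∧
    (∀ v, ndeg T v = 2 → ndeg G v = 3)

lemma tri {V : Type*} {T : SimpleGraph V} (hac : T.IsAcyclic) {x y z : V}
    (hxy : T.Adj x y) (hyz : T.Adj y z) (hxz : T.Adj x z) : False := by
  have hzx := hxz.symm
  have hne1 : x ≠ y := hxy.ne
  have hne2 : y ≠ z := hyz.ne
  have hne3 : x ≠ z := hxz.ne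
  exact hac (Walk.cons hxy (Walk.cons hyz (Walk.cons hzx Walk.nil)))
    (by simp [Walk.isCycle_def, Walk.isTrail_def, hne1, hne2, hne3, hne1.symm, hne2.symm,
      hne3.symm, Sym2.eq, Sym2.rel_iff])

lemma quad {V : Type*} {T : SimpleGraph V} (hac : T.IsAcyclic) {x y z w : V}
    (hxz : x ≠ z) (hyw : y ≠ w)
    (hxy : T.Adj x y) (hyz : T.Adj y z) (hzw : T.Adj z w) (hwx : T.Adj w x) : False := by
  have h1 : x ≠ y := hxy.ne
  have h2 : y ≠ z := hyz.ne
  have h3 : z ≠ w := hzw.ne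
  have h4 : w ≠ x := hwx.ne
  exact hac (Walk.cons hxy (Walk.cons hyz (Walk.cons hzw (Walk.cons hwx Walk.nil))))
    (by simp [Walk.isCycle_def, Walk.isTrail_def, h1, h2, h3, h4, h1.symm, h2.symm, h3.symm,
      h4.symm, hxz, hyw, hxz.symm, hyw.symm, Sym2.eq, Sym2.rel_iff])

lemma keybool : ∀ pa pb pc pd eab eac ead ebc ebd ecd : Bool,
    ((!pa || !pb || eab) && (!pa || !pc || eac) && (!pa || !pd || ead) &&
     (!pb || !pc || ebc) && (!pb || !pd || ebd) && (!pc || !pd || ecd) &&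
     (pa || (eab && eac) || (eab && ead) || (eac && ead)) &&
     (pb || (eab && ebc) || (eab && ebd) || (ebc && ebd)) &&
     (pc || (eac && ebc) || (eac && ecd) || (ebc && ecd)) &&
     (pd || (ead && ebd) || (ead && ecd) || (ebd && ecd))) = true →
    ((eab && eac && ebc) || (eab && ead && ebd) || (eac && ead && ecd) ||
     (ebc && ebd && ecd) || (eab && ebc && ecd && ead) ||
     (eab && ebd && ecd && eac) || (eac && ebc && ebd && ead)) = true := by decide

lemma nbr_nonempty {V : Type*} {G : SimpleGraph V} (hc : G.Connected) {u v : V} (h : u ≠ v) :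
    (G.neighborSet v).Nonempty := by
  obtain ⟨p⟩ := hc.preconnected v u
  cases p with
  | nil => exact absurd rfl h.symm
  | cons h' _ => exact ⟨_, h'⟩

lemma ncard_ge3 {V : Type*} [Fintype V] {S : Set V} {x y z : V} (hxy : x ≠ y) (hxz : x ≠ z)
    (hyz : y ≠ z) (hx : x ∈ S) (hy : y ∈ S) (hz : z ∈ S) : 3 ≤ S.ncard := by
  have hsub : ({x, y, z} : Set V) ⊆ S := by
    intro w hw; rcases hw with h | h | h <;> simp_all
  have h3 : ({x, y, z} : Set V).ncard = 3 := by
    rw [Set.ncard_insert_of_notMem (by simp [hxy, hxz]) (Set.toFinite _),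
      Set.ncard_pair hyz]
  rw [← h3]
  exact Set.ncard_le_ncard hsub (Set.toFinite _)

/-- In the four-clique situation: a degree-3 clique vertex has at least two T-neighbours
among the other three clique vertices. -/
lemma two_of_three {V : Type*} [Fintype V] {N T : SimpleGraph V} (hTN : T ≤ N)
    (hTc : T.Connected) (hleaf : ∀ v, ndeg T v = 1 ↔ ndeg N v = 1)
    {a b c d : V} (hab : a ≠ b) (hac : a ≠ c) (had : a ≠ d) (hbc : b ≠ c) (hbd : b ≠ d)
    (hcd : c ≠ d) (hNab : N.Adj a b) (hNac : N.Adj a c) (hNad : N.Adj a d)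
    (hdeg : ¬ 4 ≤ ndeg N a) :
    (T.Adj a b ∧ T.Adj a c) ∨ (T.Adj a b ∧ T.Adj a d) ∨ (T.Adj a c ∧ T.Adj a d) := by
  -- N-neighbourhood of a is exactly {b, c, d}
  have hsub : ({b, c, d} : Set V) ⊆ N.neighborSet a := by
    intro w hw; rcases hw with h | h | h <;> simp_all [SimpleGraph.mem_neighborSet]
  have h3 : ({b, c, d} : Set V).ncard = 3 := by
    rw [Set.ncard_insert_of_notMem (by simp [hbc, hbd]) (Set.toFinite _), Set.ncard_pair hcd]
  have hge : 3 ≤ ndeg N a := by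
    rw [ndeg, ← h3]; exact Set.ncard_le_ncard hsub (Set.toFinite _)
  have hNeq : N.neighborSet a = {b, c, d} :=
    (Set.eq_of_subset_of_ncard_le hsub (by unfold ndeg at hdeg; omega) (Set.toFinite _)).symm
  -- T-degree of a is at least 2
  have hT1 : ndeg T a ≠ 1 := by
    intro h; rw [hleaf] at h; omega
  have hT0 : 0 < ndeg T a := by
    rw [ndeg, Set.ncard_pos (Set.toFinite _)]
    exact nbr_nonempty hTc hab.symm
  have hT2 : 2 ≤ ndeg T a := by omega
  -- T-neighbours of a are among {b, c, d}
  have hTsub : T.neighborSet a ⊆ ({b, c, d} : Set V) := by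
    rw [← hNeq]; exact fun w hw => hTN hw
  by_contra hcon
  push_neg at hcon
  obtain ⟨h1, h2, h3'⟩ := hcon
  have key : ∀ w, w ∈ T.neighborSet a → ∀ w', w' ∈ T.neighborSet a → w = w' := by
    intro w hw w' hw'
    have hw2 := hTsub hw
    have hw2' := hTsub hw'
    simp only [Set.mem_insert_iff, Set.mem_singleton_iff] at hw2 hw2'
    have hwA : T.Adj a w := hw
    have hwA' : T.Adj a w' := hw'
    rcases hw2 with h | h | h <;> rcases hw2' with h' | h' | h' <;> subst h <;> subst h' <;>
      first
        | rfl
        | exact absurd hwA' (h1 hwA)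
        | exact absurd hwA (h1 hwA')
        | exact absurd hwA' (h2 hwA)
        | exact absurd hwA (h2 hwA')
        | exact absurd hwA' (h3' hwA)
        | exact absurd hwA (h3' hwA')
  obtain ⟨w, hw⟩ := nbr_nonempty hTc hab.symm
  have hsub1 : T.neighborSet a ⊆ {w} := fun w' hw' => (key w' hw' w hw)
  have : ndeg T a ≤ 1 := by
    rw [ndeg, ← Set.ncard_singleton w]
    exact Set.ncard_le_ncard hsub1 (Set.toFinite _)
  omega

set_option maxHeartbeats 1000000 in
lemma part1 {V : Type*} [Fintype V] (N : SimpleGraph V) (hstb : ∃ T, IsSTBWitness N T) :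
    N.CliqueFree 4 := by
  classical
  intro s hs
  obtain ⟨T, hTN, hTree, hleaf, h4, _⟩ := hstb
  have hcard := hs.2
  have hane : s.Nonempty := Finset.card_pos.1 (by omega)
  obtain ⟨a, ha⟩ := hane
  have h3 : (s.erase a).card = 3 := by rw [Finset.card_erase_of_mem ha]; omega
  obtain ⟨b, c, d, hbc, hbd, hcd, herase⟩ := Finset.card_eq_three.1 h3
  have hb : b ∈ s.erase a := by rw [herase]; simp
  have hc : c ∈ s.erase a := by rw [herase]; simp
  have hd : d ∈ s.erase a := by rw [herase]; simp
  have hab : a ≠ b := (Finset.ne_of_mem_erase hb).symm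
  have hac : a ≠ c := (Finset.ne_of_mem_erase hc).symm
  have had : a ≠ d := (Finset.ne_of_mem_erase hd).symm
  have hbs := Finset.mem_of_mem_erase hb
  have hcs := Finset.mem_of_mem_erase hc
  have hds := Finset.mem_of_mem_erase hd
  have hNab : N.Adj a b := hs.1 (by simpa using ha) (by simpa using hbs) hab
  have hNac : N.Adj a c := hs.1 (by simpa using ha) (by simpa using hcs) hac
  have hNad : N.Adj a d := hs.1 (by simpa using ha) (by simpa using hds) had
  have hNbc : N.Adj b c := hs.1 (by simpa using hbs) (by simpa using hcs) hbc
  have hNbd : N.Adj b d := hs.1 (by simpa using hbs) (by simpa using hds) hbd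
  have hNcd : N.Adj c d := hs.1 (by simpa using hcs) (by simpa using hds) hcd
  have hTc : T.Connected := hTree.isConnected
  have hTac : T.IsAcyclic := hTree.IsAcyclic
  -- implications for high-degree pairs
  have hIab := h4 a b hNab
  have hIac := h4 a c hNac
  have hIad := h4 a d hNad
  have hIbc := h4 b c hNbc
  have hIbd := h4 b d hNbd
  have hIcd := h4 c d hNcd
  -- two-of-three facts for possibly-low-degree vertices
  have hKa := two_of_three hTN hTc hleaf hab hac had hbc hbd hcd hNab hNac hNad
  have hKb := two_of_three hTN hTc hleaf hab.symm hbc hbd hac had hcd hNab.symm hNbc hNbd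
  have hKc := two_of_three hTN hTc hleaf hac.symm hbc.symm hcd hab had hbd
    hNac.symm hNbc.symm hNcd
  have hKd := two_of_three hTN hTc hleaf had.symm hbd.symm hcd.symm hab hac hbc
    hNad.symm hNbd.symm hNcd.symm
  have hkb := keybool (decide (4 ≤ ndeg N a)) (decide (4 ≤ ndeg N b)) (decide (4 ≤ ndeg N c))
    (decide (4 ≤ ndeg N d)) (decide (T.Adj a b)) (decide (T.Adj a c)) (decide (T.Adj a d))
    (decide (T.Adj b c)) (decide (T.Adj b d)) (decide (T.Adj c d))
  simp only [Bool.and_eq_true, Bool.or_eq_true, Bool.not_eq_true', decide_eq_true_eq,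
    decide_eq_false_iff_not] at hkb
  have hKb' : ¬4 ≤ ndeg N b →
      (T.Adj a b ∧ T.Adj b c) ∨ (T.Adj a b ∧ T.Adj b d) ∨ (T.Adj b c ∧ T.Adj b d) := fun h => by
    rcases hKb h with ⟨x, y⟩ | ⟨x, y⟩ | ⟨x, y⟩
    exacts [Or.inl ⟨x.symm, y⟩, Or.inr (Or.inl ⟨x.symm, y⟩), Or.inr (Or.inr ⟨x, y⟩)]
  have hKc' : ¬4 ≤ ndeg N c →
      (T.Adj a c ∧ T.Adj b c) ∨ (T.Adj a c ∧ T.Adj c d) ∨ (T.Adj b c ∧ T.Adj c d) := fun h => by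
    rcases hKc h with ⟨x, y⟩ | ⟨x, y⟩ | ⟨x, y⟩
    exacts [Or.inl ⟨x.symm, y.symm⟩, Or.inr (Or.inl ⟨x.symm, y⟩), Or.inr (Or.inr ⟨x.symm, y⟩)]
  have hKd' : ¬4 ≤ ndeg N d →
      (T.Adj a d ∧ T.Adj b d) ∨ (T.Adj a d ∧ T.Adj c d) ∨ (T.Adj b d ∧ T.Adj c d) := fun h => by
    rcases hKd h with ⟨x, y⟩ | ⟨x, y⟩ | ⟨x, y⟩
    exacts [Or.inl ⟨x.symm, y.symm⟩, Or.inr (Or.inl ⟨x.symm, y.symm⟩),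
      Or.inr (Or.inr ⟨x.symm, y.symm⟩)]
  have hconc := hkb (by
    refine ⟨⟨⟨⟨⟨⟨⟨⟨⟨?_, ?_⟩, ?_⟩, ?_⟩, ?_⟩, ?_⟩, ?_⟩, ?_⟩, ?_⟩, ?_⟩
    · by_cases hA : 4 ≤ ndeg N a
      · by_cases hB : 4 ≤ ndeg N b
        · exact Or.inr (hIab hA hB)
        · exact Or.inl (Or.inr hB)
      · exact Or.inl (Or.inl hA)
    · by_cases hA : 4 ≤ ndeg N a
      · by_cases hB : 4 ≤ ndeg N c
        · exact Or.inr (hIac hA hB)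
        · exact Or.inl (Or.inr hB)
      · exact Or.inl (Or.inl hA)
    · by_cases hA : 4 ≤ ndeg N a
      · by_cases hB : 4 ≤ ndeg N d
        · exact Or.inr (hIad hA hB)
        · exact Or.inl (Or.inr hB)
      · exact Or.inl (Or.inl hA)
    · by_cases hA : 4 ≤ ndeg N b
      · by_cases hB : 4 ≤ ndeg N c
        · exact Or.inr (hIbc hA hB)
        · exact Or.inl (Or.inr hB)
      · exact Or.inl (Or.inl hA)
    · by_cases hA : 4 ≤ ndeg N b
      · by_cases hB : 4 ≤ ndeg N d
        · exact Or.inr (hIbd hA hB)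
        · exact Or.inl (Or.inr hB)
      · exact Or.inl (Or.inl hA)
    · by_cases hA : 4 ≤ ndeg N c
      · by_cases hB : 4 ≤ ndeg N d
        · exact Or.inr (hIcd hA hB)
        · exact Or.inl (Or.inr hB)
      · exact Or.inl (Or.inl hA)
    · by_cases hA : 4 ≤ ndeg N a
      · exact Or.inl (Or.inl (Or.inl hA))
      · rcases hKa hA with h | h | h
        exacts [Or.inl (Or.inl (Or.inr h)), Or.inl (Or.inr h), Or.inr h]
    · by_cases hA : 4 ≤ ndeg N b
      · exact Or.inl (Or.inl (Or.inl hA))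
      · rcases hKb' hA with h | h | h
        exacts [Or.inl (Or.inl (Or.inr h)), Or.inl (Or.inr h), Or.inr h]
    · by_cases hA : 4 ≤ ndeg N c
      · exact Or.inl (Or.inl (Or.inl hA))
      · rcases hKc' hA with h | h | h
        exacts [Or.inl (Or.inl (Or.inr h)), Or.inl (Or.inr h), Or.inr h]
    · by_cases hA : 4 ≤ ndeg N d
      · exact Or.inl (Or.inl (Or.inl hA))
      · rcases hKd' hA with h | h | h
        exacts [Or.inl (Or.inl (Or.inr h)), Or.inl (Or.inr h), Or.inr h])
  rcases hconc with
    ((((((⟨⟨h1, h2⟩, h3'⟩ | ⟨⟨h1, h2⟩, h3'⟩) | ⟨⟨h1, h2⟩, h3'⟩) | ⟨⟨h1, h2⟩, h3'⟩) |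
      ⟨⟨⟨h1, h2⟩, h3'⟩, h4'⟩) | ⟨⟨⟨h1, h2⟩, h3'⟩, h4'⟩) | ⟨⟨⟨h1, h2⟩, h3'⟩, h4'⟩)
  · exact tri hTac h1 h3' h2
  · exact tri hTac h1 h3' h2
  · exact tri hTac h1 h3' h2
  · exact tri hTac h1 h3' h2
  · exact quad hTac hac hbd h1 h2 h3' h4'.symm
  · exact quad hTac had hbc h1 h2 h3'.symm h4'.symm
  · exact quad hTac hab hcd h1 h2.symm h3' h4'.symm

lemma walk_const {α : Type*} {G : SimpleGraph α} {f : α → Bool}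
    (h : ∀ a b, G.Adj a b → f a = f b) {u v : α} (hr : G.Reachable u v) : f u = f v := by
  obtain ⟨p⟩ := hr
  induction p with
  | nil => rfl
  | cons h' _ ih => exact (h _ _ h').trans ih

lemma pathGraph_bridge (n : ℕ) (v w : Fin n) (hvw : v.val + 1 = w.val)
    (hadj : (pathGraph n).Adj v w) : (pathGraph n).IsBridge s(v, w) := by
  rw [isBridge_iff]
  refine fun hr => ?_
  have hinv : ∀ a b : Fin n, (pathGraph n \ fromEdgeSet {s(v, w)}).Adj a b →
      (fun x : Fin n => decide (x.val ≤ v.val)) a = (fun x : Fin n => decide (x.val ≤ v.val)) b := by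
    intro a b hab
    rw [sdiff_adj] at hab
    obtain ⟨hp, hne⟩ := hab
    rw [pathGraph_adj] at hp
    simp only [fromEdgeSet_adj, Set.mem_singleton_iff, ne_eq, not_and, not_not] at hne
    simp only [decide_eq_decide]
    constructor
    · intro ha
      by_contra hb
      have hav : a = v := Fin.ext (by omega)
      have hbw : b = w := Fin.ext (by omega)
      subst hav; subst hbw
      exact absurd (congrArg Fin.val (hne rfl)) (by omega)
    · intro hb
      by_contra ha
      have hbv : b = v := Fin.ext (by omega)
      have haw : a = w := Fin.ext (by omega)
      subst hbv; subst haw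
      exact absurd (congrArg Fin.val (hne Sym2.eq_swap)) (by omega)
  have := walk_const hinv hr
  simp only [decide_eq_decide] at this
  omega

lemma pathGraph_isAcyclic (n : ℕ) : (pathGraph n).IsAcyclic := by
  rw [isAcyclic_iff_forall_adj_isBridge]
  intro v w hvw
  rcases pathGraph_adj.1 hvw with h | h
  · exact pathGraph_bridge n v w h hvw
  · rw [Sym2.eq_swap]
    exact pathGraph_bridge n w v h hvw.symm

def cliquePart (k : ℕ) : SimpleGraph (Fin (k + 6)) :=
  SimpleGraph.fromRel (fun a b => 1 ≤ a.val ∧ a.val ≤ k + 4 ∧ 1 ≤ b.val ∧ b.val ≤ k + 4)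

def Hgraph (k : ℕ) : SimpleGraph (Fin (k + 6)) := pathGraph (k + 6) ⊔ cliquePart k

lemma Hgraph_adj (k : ℕ) (a b : Fin (k + 6)) : (Hgraph k).Adj a b ↔
    (a.val + 1 = b.val ∨ b.val + 1 = a.val) ∨
      (a ≠ b ∧ 1 ≤ a.val ∧ a.val ≤ k + 4 ∧ 1 ≤ b.val ∧ b.val ≤ k + 4) := by
  simp only [Hgraph, cliquePart, sup_adj, fromRel_adj, pathGraph_adj]
  tauto

lemma Hadj_of (k : ℕ) (v w : Fin (k + 6)) (h : v.val ≠ w.val) (h1 : 1 ≤ v.val)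
    (h2 : v.val ≤ k + 4) (h3 : 1 ≤ w.val) (h4 : w.val ≤ k + 4) : (Hgraph k).Adj v w :=
  (Hgraph_adj k v w).2 (Or.inr ⟨fun he => h (by rw [he]), h1, h2, h3, h4⟩)

lemma ncard_ge3' {V : Type*} [Fintype V] {S : Set V} {x y z : V} (hxy : x ≠ y) (hxz : x ≠ z)
    (hyz : y ≠ z) (hx : x ∈ S) (hy : y ∈ S) (hz : z ∈ S) : 3 ≤ S.ncard := by
  have hsub : ({x, y, z} : Set V) ⊆ S := by
    intro w hw; rcases hw with h | h | h <;> simp_all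
  have h3 : ({x, y, z} : Set V).ncard = 3 := by
    rw [Set.ncard_insert_of_notMem (by simp [hxy, hxz]) (Set.toFinite _), Set.ncard_pair hyz]
  rw [← h3]
  exact Set.ncard_le_ncard hsub (Set.toFinite _)

lemma Hnbr_zero (k : ℕ) :
    (Hgraph k).neighborSet ⟨0, by omega⟩ = {(⟨1, by omega⟩ : Fin (k + 6))} := by
  ext w
  have := w.isLt
  simp only [mem_neighborSet, Hgraph_adj, Set.mem_singleton_iff, Fin.ext_iff, ne_eq]
  omega

lemma Hnbr_last (k : ℕ) :
    (Hgraph k).neighborSet ⟨k + 5, by omega⟩ = {(⟨k + 4, by omega⟩ : Fin (k + 6))} := by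
  ext w
  have := w.isLt
  simp only [mem_neighborSet, Hgraph_adj, Set.mem_singleton_iff, Fin.ext_iff, ne_eq]
  omega

lemma Hdeg_mid (k : ℕ) (v : Fin (k + 6)) (h1 : 1 ≤ v.val) (h2 : v.val ≤ k + 4) :
    3 ≤ ndeg (Hgraph k) v := by
  have hvlt := v.isLt
  rw [ndeg]
  by_cases e1 : v.val = 1
  · exact ncard_ge3' (x := ⟨2, by omega⟩) (y := ⟨3, by omega⟩) (z := ⟨4, by omega⟩)
      (Fin.ne_of_val_ne (by first | omega | (simp only [Fin.val_mk]; omega))) (Fin.ne_of_val_ne (by first | omega | (simp only [Fin.val_mk]; omega))) (Fin.ne_of_val_ne (by first | omega | (simp only [Fin.val_mk]; omega)))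
      (Hadj_of k v _ (by first | omega | (simp only [Fin.val_mk]; omega)) h1 h2 (by first | omega | (simp only [Fin.val_mk]; omega)) (by first | omega | (simp only [Fin.val_mk]; omega)))
      (Hadj_of k v _ (by first | omega | (simp only [Fin.val_mk]; omega)) h1 h2 (by first | omega | (simp only [Fin.val_mk]; omega)) (by first | omega | (simp only [Fin.val_mk]; omega)))
      (Hadj_of k v _ (by first | omega | (simp only [Fin.val_mk]; omega)) h1 h2 (by first | omega | (simp only [Fin.val_mk]; omega)) (by first | omega | (simp only [Fin.val_mk]; omega)))
  · by_cases e2 : v.val = 2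
    · exact ncard_ge3' (x := ⟨1, by omega⟩) (y := ⟨3, by omega⟩) (z := ⟨4, by omega⟩)
        (Fin.ne_of_val_ne (by first | omega | (simp only [Fin.val_mk]; omega))) (Fin.ne_of_val_ne (by first | omega | (simp only [Fin.val_mk]; omega))) (Fin.ne_of_val_ne (by first | omega | (simp only [Fin.val_mk]; omega)))
        (Hadj_of k v _ (by first | omega | (simp only [Fin.val_mk]; omega)) h1 h2 (by first | omega | (simp only [Fin.val_mk]; omega)) (by first | omega | (simp only [Fin.val_mk]; omega)))
        (Hadj_of k v _ (by first | omega | (simp only [Fin.val_mk]; omega)) h1 h2 (by first | omega | (simp only [Fin.val_mk]; omega)) (by first | omega | (simp only [Fin.val_mk]; omega)))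
        (Hadj_of k v _ (by first | omega | (simp only [Fin.val_mk]; omega)) h1 h2 (by first | omega | (simp only [Fin.val_mk]; omega)) (by first | omega | (simp only [Fin.val_mk]; omega)))
    · by_cases e3 : v.val = 3
      · exact ncard_ge3' (x := ⟨1, by omega⟩) (y := ⟨2, by omega⟩) (z := ⟨4, by omega⟩)
          (Fin.ne_of_val_ne (by first | omega | (simp only [Fin.val_mk]; omega))) (Fin.ne_of_val_ne (by first | omega | (simp only [Fin.val_mk]; omega))) (Fin.ne_of_val_ne (by first | omega | (simp only [Fin.val_mk]; omega)))
          (Hadj_of k v _ (by first | omega | (simp only [Fin.val_mk]; omega)) h1 h2 (by first | omega | (simp only [Fin.val_mk]; omega)) (by first | omega | (simp only [Fin.val_mk]; omega)))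
          (Hadj_of k v _ (by first | omega | (simp only [Fin.val_mk]; omega)) h1 h2 (by first | omega | (simp only [Fin.val_mk]; omega)) (by first | omega | (simp only [Fin.val_mk]; omega)))
          (Hadj_of k v _ (by first | omega | (simp only [Fin.val_mk]; omega)) h1 h2 (by first | omega | (simp only [Fin.val_mk]; omega)) (by first | omega | (simp only [Fin.val_mk]; omega)))
      · exact ncard_ge3' (x := ⟨1, by omega⟩) (y := ⟨2, by omega⟩) (z := ⟨3, by omega⟩)
          (Fin.ne_of_val_ne (by first | omega | (simp only [Fin.val_mk]; omega))) (Fin.ne_of_val_ne (by first | omega | (simp only [Fin.val_mk]; omega))) (Fin.ne_of_val_ne (by first | omega | (simp only [Fin.val_mk]; omega)))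
          (Hadj_of k v _ (by first | omega | (simp only [Fin.val_mk]; omega)) h1 h2 (by first | omega | (simp only [Fin.val_mk]; omega)) (by first | omega | (simp only [Fin.val_mk]; omega)))
          (Hadj_of k v _ (by first | omega | (simp only [Fin.val_mk]; omega)) h1 h2 (by first | omega | (simp only [Fin.val_mk]; omega)) (by first | omega | (simp only [Fin.val_mk]; omega)))
          (Hadj_of k v _ (by first | omega | (simp only [Fin.val_mk]; omega)) h1 h2 (by first | omega | (simp only [Fin.val_mk]; omega)) (by first | omega | (simp only [Fin.val_mk]; omega)))

lemma Tnbr_zero (k : ℕ) :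
    (pathGraph (k + 6)).neighborSet ⟨0, by omega⟩ = {(⟨1, by omega⟩ : Fin (k + 6))} := by
  ext w
  have := w.isLt
  simp only [mem_neighborSet, pathGraph_adj, Set.mem_singleton_iff, Fin.ext_iff]
  omega

lemma Tnbr_last (k : ℕ) :
    (pathGraph (k + 6)).neighborSet ⟨k + 5, by omega⟩ = {(⟨k + 4, by omega⟩ : Fin (k + 6))} := by
  ext w
  have := w.isLt
  simp only [mem_neighborSet, pathGraph_adj, Set.mem_singleton_iff, Fin.ext_iff]
  omega

lemma Tnbr_mid (k : ℕ) (v : Fin (k + 6)) (h1 : 1 ≤ v.val) (h2 : v.val ≤ k + 4) :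
    (pathGraph (k + 6)).neighborSet v =
      {(⟨v.val - 1, by omega⟩ : Fin (k + 6)), ⟨v.val + 1, by omega⟩} := by
  ext w
  have := w.isLt
  simp only [mem_neighborSet, pathGraph_adj, Set.mem_insert_iff, Set.mem_singleton_iff,
    Fin.ext_iff]
  omega

lemma part2 (k : ℕ) : ∃ (n : ℕ) (H : SimpleGraph (Fin n)), H.Connected ∧ (∀ v, ndeg H v ≠ 2) ∧
    (∃ T ≤ H, T.IsTree ∧ ∀ v, ndeg T v = 1 ↔ ndeg H v = 1) ∧
    ∃ s : Finset (Fin n), H.IsNClique k s := by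
  refine ⟨k + 6, Hgraph k, ?_, ?_, ⟨pathGraph (k + 6), le_sup_left,
    ⟨pathGraph_connected (k + 5), pathGraph_isAcyclic _⟩, ?_⟩, ?_⟩
  · exact (pathGraph_connected (k + 5)).mono le_sup_left
  · intro v
    have hvlt := v.isLt
    by_cases h0 : v.val = 0
    · have : v = ⟨0, by omega⟩ := Fin.ext h0
      rw [this, ndeg, Hnbr_zero, Set.ncard_singleton]
      omega
    · by_cases hl : v.val = k + 5
      · have : v = ⟨k + 5, by omega⟩ := Fin.ext hl
        rw [this, ndeg, Hnbr_last, Set.ncard_singleton]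
        omega
      · have := Hdeg_mid k v (by first | omega | (simp only [Fin.val_mk]; omega)) (by first | omega | (simp only [Fin.val_mk]; omega))
        omega
  · intro v
    have hvlt := v.isLt
    by_cases h0 : v.val = 0
    · have hv : v = ⟨0, by omega⟩ := Fin.ext h0
      rw [hv, ndeg, ndeg, Tnbr_zero, Hnbr_zero]
    · by_cases hl : v.val = k + 5
      · have hv : v = ⟨k + 5, by omega⟩ := Fin.ext hl
        rw [hv, ndeg, ndeg, Tnbr_last, Hnbr_last]
      · have hT : ndeg (pathGraph (k + 6)) v = 2 := by
          rw [ndeg, Tnbr_mid k v (by first | omega | (simp only [Fin.val_mk]; omega)) (by first | omega | (simp only [Fin.val_mk]; omega))]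
          exact Set.ncard_pair (Fin.ne_of_val_ne (by first | omega | (simp only [Fin.val_mk]; omega)))
        have hH := Hdeg_mid k v (by first | omega | (simp only [Fin.val_mk]; omega)) (by first | omega | (simp only [Fin.val_mk]; omega))
        constructor <;> intro h <;> omega
  · refine ⟨Finset.Icc ⟨1, by omega⟩ ⟨k, by omega⟩, ?_, ?_⟩
    · intro u hu w hw hne
      simp only [Finset.coe_Icc, Set.mem_Icc, Fin.le_def] at hu hw
      exact Hadj_of k u w (fun h => hne (Fin.ext h)) (by first | omega | (simp only [Fin.val_mk]; omega)) (by first | omega | (simp only [Fin.val_mk]; omega)) (by first | omega | (simp only [Fin.val_mk]; omega)) (by first | omega | (simp only [Fin.val_mk]; omega))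
    · rw [Fin.card_Icc]
      simp only [Fin.val_mk]
      omega

/-- A strongly tree-based network has clique number at most 3 (no 4-clique), while for every
k there is a tree-based network containing a clique of size k. -/
theorem stmt_19 {V : Type*} [Fintype V] (N : SimpleGraph V) (hconn : N.Connected)
    (hno2 : ∀ v, ndeg N v ≠ 2) (hstb : ∃ T, IsSTBWitness N T) :
    N.CliqueFree 4 ∧
    ∀ k : ℕ, ∃ (n : ℕ) (H : SimpleGraph (Fin n)), H.Connected ∧ (∀ v, ndeg H v ≠ 2) ∧
      (∃ T ≤ H, T.IsTree ∧ ∀ v, ndeg T v = 1 ↔ ndeg H v = 1) ∧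
      ∃ s : Finset (Fin n), H.IsNClique k s := by
  exact ⟨part1 N hstb, fun k => part2 k⟩
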